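/- For all integers d ≥ 1, n ≥ 1 and 0 ≤ k ≤ d, the recurrence D(d,n,k) = (nk+1)·D(d-1,n,k) + (n(d-k)+(n-1))·D(d-1,n,k-1) holds, where D(d,n,k) := Σ_{i=0}^{k} (-1)^i · C(d+1,i) · (n(k-i)+1)^d. -/

import Mathlib

/-- The descent polynomial coefficient `D(d,n,k)` (for integer `k`, zero when `k < 0`),
via its explicit alternating-sum formula. -/
noncomputable def D (d n : ℕ) (k : ℤ) : ℝ :=
  if k < 0 then 0 else
    ∑ i ∈ Finset.range (k.toNat + 1),
      (-1 : ℝ) ^ i * ((d + 1).choose i : ℝ) * ((n : ℝ) * ((k : ℝ) - i) + 1) ^ d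

lemma D_natCast (d n K : ℕ) : D d n (K : ℤ) =
    ∑ i ∈ Finset.range (K + 1),
      (-1 : ℝ) ^ i * ((d + 1).choose i : ℝ) * ((n : ℝ) * ((K : ℝ) - i) + 1) ^ d := by
  simp [D]

theorem descent_poly_recurrence (d n : ℕ) (k : ℤ) (hd : 1 ≤ d) (hn : 1 ≤ n)
    (hk0 : 0 ≤ k) (hkd : k ≤ (d : ℤ)) :
    D d n k = ((n : ℝ) * k + 1) * D (d - 1) n k +
      ((n : ℝ) * ((d : ℝ) - k) + ((n : ℝ) - 1)) * D (d - 1) n (k - 1) := by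
  obtain ⟨m, rfl⟩ : ∃ m, d = m + 1 := ⟨d - 1, (Nat.succ_pred_eq_of_pos hd).symm⟩
  lift k to ℕ using hk0 with K
  have hm1 : m + 1 - 1 = m := rfl
  rw [hm1]
  cases K with
  | zero =>
      have h0 : ((0 : ℕ) : ℤ) - 1 = -1 := by norm_num
      rw [h0]
      have hneg : D m n (-1) = 0 := by simp [D]
      rw [hneg, D_natCast, D_natCast]
      simp
  | succ J =>
      have h1 : ((J + 1 : ℕ) : ℤ) - 1 = (J : ℤ) := by push_cast; ring
      rw [h1, D_natCast, D_natCast, D_natCast]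
      push_cast
      set x : ℕ → ℝ := fun i => (n : ℝ) * (((J : ℝ) + 1) - i) + 1 with hx
      -- per-term identity for i+1-th terms
      have key : ∀ i ∈ Finset.range (J + 1),
          (-1 : ℝ) ^ (i+1) * ((m + 2).choose (i+1) : ℝ) * (x (i+1)) ^ (m+1)
            = ((n : ℝ) * ((J:ℝ)+1) + 1) *
                ((-1 : ℝ) ^ (i+1) * ((m + 1).choose (i+1) : ℝ) * (x (i+1)) ^ m)
              + ((n : ℝ) * (((m:ℝ)+1) - ((J:ℝ)+1)) + ((n : ℝ) - 1)) *
                ((-1 : ℝ) ^ i * ((m + 1).choose i : ℝ) * ((n : ℝ) * ((J : ℝ) - i) + 1) ^ m) := by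
        intro i _
        have hpascal : ((m + 2).choose (i+1) : ℝ)
            = ((m + 1).choose (i+1) : ℝ) + ((m + 1).choose i : ℝ) := by
          have := Nat.choose_succ_succ (m + 1) i
          push_cast [this]
          ring
        have habs : ((m : ℝ) + 2) * ((m + 1).choose i : ℝ)
            = ((m + 2).choose (i+1) : ℝ) * ((i : ℝ) + 1) := by
          have h := Nat.add_one_mul_choose_eq (m + 1) i
          exact_mod_cast h
        have hxx : (n : ℝ) * ((J : ℝ) - i) + 1 = x (i+1) := by
          simp only [hx]; push_cast; ring
        rw [hxx, pow_succ]
        simp only [hx]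
        push_cast
        linear_combination
          ((-1:ℝ)^(i+1) * ((n : ℝ) * (((J : ℝ) + 1) - ((i:ℝ)+1)) + 1)^m *
            (((n : ℝ) * (((J : ℝ) + 1) - ((i:ℝ)+1)) + 1) + (n:ℝ)*((i:ℝ)+1))) * hpascal
          + ((-1:ℝ)^(i+1) * ((n : ℝ) * (((J : ℝ) + 1) - ((i:ℝ)+1)) + 1)^m * (n:ℝ)) * habs
      -- peel off the i = 0 term on the left and first right sum
      rw [Finset.sum_range_succ' (fun i => (-1 : ℝ) ^ i * ((m + 2).choose i : ℝ) * (x i) ^ (m+1)),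
          Finset.sum_range_succ' (fun i => (-1 : ℝ) ^ i * ((m + 1).choose i : ℝ) * (x i) ^ m)]
      rw [Finset.sum_congr rfl key]
      rw [Finset.sum_add_distrib, ← Finset.mul_sum, ← Finset.mul_sum]
      have h00 : (-1 : ℝ) ^ 0 * ((m + 2).choose 0 : ℝ) * (x 0) ^ (m+1)
          = ((n : ℝ) * ((J:ℝ)+1) + 1) * ((-1 : ℝ) ^ 0 * ((m + 1).choose 0 : ℝ) * (x 0) ^ m) := by
        simp only [hx, pow_succ, Nat.choose_zero_right]
        push_cast
        ring
      rw [h00]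
      ring
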